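/- Let b:[0,1]→(0,∞) be twice continuously differentiable with b(0) ≠ b(1), satisfying either (i) b'(0) > 0, b' ≥ 0 on [0,1] and b''b − (b')² ≤ 0 on [0,1], or (ii) b'(0) < 0, b' ≤ 0 on [0,1] and b''b − (b')² ≥ 0 on [0,1]. Define F_Z:[0,1]→ℝ by F_Z(z) = 1 − (b'(z)/b'(0))·(b(0)/b(z)) for z ∈ [0,1) and F_Z(1) = 1. Then F_Z is a distribution function on [0,1] (non-decreasing, valued in [0,1], continuous on [0,1), F_Z(0)=0, F_Z(1)=1), with derivative on (0,1) equal to f_Z(z) = (b(0)/(−b'(0))) · (b''(z)b(z) − b'(z)²)/b(z)² ≥ 0, point mass at 1 equal to p = 1 − lim_{z→1⁻} F_Z(z) = (b'(1)/b'(0))·(b(0)/b(1)), and mean ∫₀¹ (1 − F_Z(s)) ds = (b(0)/(−b'(0))) · log(b(0)/b(1)). -/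

import Mathlib

/-- For a twice continuously differentiable inner function
`b : [0,1] → (0,∞)` with `b 0 ≠ b 1` satisfying condition (i) or (ii) of the
logarithmic linked exposure family, the function `F_Z z = 1 - (b' z / b' 0)(b 0 / b z)`
for `z ∈ [0,1)`, `F_Z 1 = 1`, is a distribution function on `[0,1]` with density
`f_Z z = (b 0 / (-b' 0)) (b'' z b z - (b' z)²)/(b z)² ≥ 0` on `(0,1)`, point mass at `1`
equal to `(b' 1 / b' 0)(b 0 / b 1)` (i.e. left limit `1 - (b' 1 / b' 0)(b 0 / b 1)`),
and mean `∫₀¹ (1 - F_Z s) ds = (b 0 / (-b' 0)) log (b 0 / b 1)`. -/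
theorem statement11 (b b' b'' F : ℝ → ℝ)
    (hbpos : ∀ z ∈ Set.Icc (0:ℝ) 1, 0 < b z)
    (hd1 : ∀ z ∈ Set.Icc (0:ℝ) 1, HasDerivWithinAt b (b' z) (Set.Icc 0 1) z)
    (hd2 : ∀ z ∈ Set.Icc (0:ℝ) 1, HasDerivWithinAt b' (b'' z) (Set.Icc 0 1) z)
    (hcont : ContinuousOn b'' (Set.Icc 0 1))
    (hne : b 0 ≠ b 1)
    (hcond : (0 < b' 0 ∧ (∀ z ∈ Set.Icc (0:ℝ) 1, 0 ≤ b' z) ∧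
                (∀ z ∈ Set.Icc (0:ℝ) 1, b'' z * b z - (b' z) ^ 2 ≤ 0)) ∨
             (b' 0 < 0 ∧ (∀ z ∈ Set.Icc (0:ℝ) 1, b' z ≤ 0) ∧
                (∀ z ∈ Set.Icc (0:ℝ) 1, 0 ≤ b'' z * b z - (b' z) ^ 2)))
    (hF : ∀ z ∈ Set.Ico (0:ℝ) 1, F z = 1 - b' z / b' 0 * (b 0 / b z))
    (hF1 : F 1 = 1) :
    MonotoneOn F (Set.Icc 0 1) ∧
    (∀ z ∈ Set.Icc (0:ℝ) 1, F z ∈ Set.Icc (0:ℝ) 1) ∧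
    ContinuousOn F (Set.Ico 0 1) ∧
    F 0 = 0 ∧ F 1 = 1 ∧
    (∀ z ∈ Set.Ioo (0:ℝ) 1,
      HasDerivAt F (b 0 / (-(b' 0)) * ((b'' z * b z - (b' z) ^ 2) / (b z) ^ 2)) z ∧
      0 ≤ b 0 / (-(b' 0)) * ((b'' z * b z - (b' z) ^ 2) / (b z) ^ 2)) ∧
    Filter.Tendsto F (nhdsWithin 1 (Set.Iio 1))
      (nhds (1 - b' 1 / b' 0 * (b 0 / b 1))) ∧
    (∫ s in (0:ℝ)..1, (1 - F s)) = b 0 / (-(b' 0)) * Real.log (b 0 / b 1) := by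
  have hc0 : b' 0 ≠ 0 := by
    rcases hcond with ⟨h, _⟩ | ⟨h, _⟩
    · exact ne_of_gt h
    · exact ne_of_lt h
  set H : ℝ → ℝ := fun z => 1 - b 0 / b' 0 * (b' z / b z) with hHdef
  have hb0 : 0 < b 0 := hbpos 0 (by norm_num)
  have hb1 : 0 < b 1 := hbpos 1 (by norm_num)
  have hbne : ∀ z ∈ Set.Icc (0:ℝ) 1, b z ≠ 0 := fun z hz => (hbpos z hz).ne'
  have hbcont : ContinuousOn b (Set.Icc 0 1) := fun z hz => (hd1 z hz).continuousWithinAt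
  have hb'cont : ContinuousOn b' (Set.Icc 0 1) := fun z hz => (hd2 z hz).continuousWithinAt
  have hHcont : ContinuousOn H (Set.Icc 0 1) :=
    continuousOn_const.sub (continuousOn_const.mul (hb'cont.div hbcont hbne))
  have hFH : ∀ z ∈ Set.Ico (0:ℝ) 1, F z = H z := by
    intro z hz
    rw [hF z hz, hHdef]
    ring
  -- nonnegativity of the density on Icc
  have hdens : ∀ z ∈ Set.Icc (0:ℝ) 1,
      0 ≤ b 0 / (-(b' 0)) * ((b'' z * b z - (b' z) ^ 2) / (b z) ^ 2) := by
    intro z hz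
    have hbz2 : (0:ℝ) < (b z) ^ 2 := pow_pos (hbpos z hz) 2
    rcases hcond with ⟨h1, _, h3⟩ | ⟨h1, _, h3⟩
    · have hA : b 0 / (-(b' 0)) ≤ 0 :=
        div_nonpos_of_nonneg_of_nonpos hb0.le (by linarith)
      have hB : (b'' z * b z - (b' z) ^ 2) / (b z) ^ 2 ≤ 0 :=
        div_nonpos_of_nonpos_of_nonneg (h3 z hz) hbz2.le
      have h := mul_nonneg (neg_nonneg.2 hA) (neg_nonneg.2 hB)
      simpa [neg_mul_neg] using h
    · have hA : 0 ≤ b 0 / (-(b' 0)) := div_nonneg hb0.le (by linarith)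
      have hB : 0 ≤ (b'' z * b z - (b' z) ^ 2) / (b z) ^ 2 :=
        div_nonneg (h3 z hz) hbz2.le
      exact mul_nonneg hA hB
  -- derivative of H at interior points
  have hHderiv : ∀ x ∈ Set.Ioo (0:ℝ) 1,
      HasDerivAt H (b 0 / (-(b' 0)) * ((b'' x * b x - (b' x) ^ 2) / (b x) ^ 2)) x := by
    intro x hx
    have hxI : Set.Icc (0:ℝ) 1 ∈ nhds x := Icc_mem_nhds hx.1 hx.2
    have hxm : x ∈ Set.Icc (0:ℝ) 1 := Set.Ioo_subset_Icc_self hx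
    have h1 : HasDerivAt b (b' x) x := (hd1 x hxm).hasDerivAt hxI
    have h2 : HasDerivAt b' (b'' x) x := (hd2 x hxm).hasDerivAt hxI
    have hq : HasDerivAt (fun z => b' z / b z)
        ((b'' x * b x - b' x * b' x) / b x ^ 2) x := h2.div h1 (hbne x hxm)
    have := (hq.const_mul (b 0 / b' 0)).const_sub 1
    refine this.congr_deriv ?_
    rw [div_neg]
    ring
  -- H is monotone on Icc
  have hHmono : MonotoneOn H (Set.Icc 0 1) := by
    apply monotoneOn_of_deriv_nonneg (convex_Icc 0 1) hHcont
    · intro x hx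
      rw [interior_Icc] at hx
      exact (hHderiv x hx).differentiableAt.differentiableWithinAt
    · intro x hx
      rw [interior_Icc] at hx
      rw [(hHderiv x hx).deriv]
      exact hdens x (Set.Ioo_subset_Icc_self hx)
  -- H ≤ 1 on Icc
  have hHle1 : ∀ z ∈ Set.Icc (0:ℝ) 1, H z ≤ 1 := by
    intro z hz
    have : 0 ≤ b 0 / b' 0 * (b' z / b z) := by
      rcases hcond with ⟨h1, h2, _⟩ | ⟨h1, h2, _⟩
      · exact mul_nonneg (div_nonneg hb0.le h1.le)
          (div_nonneg (h2 z hz) (hbpos z hz).le)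
      · have hA := div_nonpos_of_nonneg_of_nonpos hb0.le h1.le
        have hB := div_nonpos_of_nonpos_of_nonneg (h2 z hz) (hbpos z hz).le
        have h := mul_nonneg (neg_nonneg.2 hA) (neg_nonneg.2 hB)
        simpa [neg_mul_neg] using h
    simp only [hHdef]
    linarith
  have hH0 : H 0 = 0 := by
    simp only [hHdef]
    field_simp
    norm_num
  have hF0 : F 0 = 0 := by
    rw [hFH 0 ⟨le_refl 0, zero_lt_one⟩, hH0]
  -- Monotonicity of F
  have hFmono : MonotoneOn F (Set.Icc 0 1) := by
    intro x hx y hy hxy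
    rcases lt_or_eq_of_le hy.2 with h1 | h1
    · have hxI : x ∈ Set.Ico (0:ℝ) 1 := ⟨hx.1, lt_of_le_of_lt hxy h1⟩
      rw [hFH x hxI, hFH y ⟨hy.1, h1⟩]
      exact hHmono hx hy hxy
    · rcases lt_or_eq_of_le hx.2 with h2 | h2
      · rw [hFH x ⟨hx.1, h2⟩, h1, hF1]
        exact hHle1 x hx
      · rw [h1, h2]
    -- F maps Icc into Icc
  have hFrange : ∀ z ∈ Set.Icc (0:ℝ) 1, F z ∈ Set.Icc (0:ℝ) 1 := by
    intro z hz
    constructor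
    · rw [← hF0]
      exact hFmono ⟨le_refl 0, zero_le_one⟩ hz hz.1
    · rw [← hF1]
      exact hFmono hz ⟨zero_le_one, le_refl 1⟩ hz.2
  -- continuity on Ico
  have hFcont : ContinuousOn F (Set.Ico 0 1) :=
    (hHcont.mono Set.Ico_subset_Icc_self).congr hFH
  -- left limit at 1
  have hTend : Filter.Tendsto F (nhdsWithin 1 (Set.Iio 1))
      (nhds (1 - b' 1 / b' 0 * (b 0 / b 1))) := by
    have h2 : ContinuousWithinAt H (Set.Ico 0 1) 1 :=
      (hHcont 1 ⟨zero_le_one, le_refl 1⟩).mono Set.Ico_subset_Icc_self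
    have h3 : Filter.Tendsto H (nhdsWithin 1 (Set.Iio 1)) (nhds (H 1)) := by
      rw [← nhdsWithin_Ico_eq_nhdsLT (zero_lt_one (α := ℝ))]
      exact h2
    have hval : H 1 = 1 - b' 1 / b' 0 * (b 0 / b 1) := by
      simp only [hHdef]; ring
    rw [← hval]
    apply h3.congr'
    rw [← nhdsWithin_Ico_eq_nhdsLT (zero_lt_one (α := ℝ))]
    filter_upwards [self_mem_nhdsWithin] with z hz
    exact (hFH z hz).symm
  -- derivative of F on Ioo
  have hFderiv : ∀ z ∈ Set.Ioo (0:ℝ) 1,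
      HasDerivAt F (b 0 / (-(b' 0)) * ((b'' z * b z - (b' z) ^ 2) / (b z) ^ 2)) z := by
    intro z hz
    apply (hHderiv z hz).congr_of_eventuallyEq
    filter_upwards [Ioo_mem_nhds hz.1 hz.2] with y hy
    exact hFH y ⟨hy.1.le, hy.2⟩
  -- integral
  have hInt : (∫ s in (0:ℝ)..1, (1 - F s)) = b 0 / (-(b' 0)) * Real.log (b 0 / b 1) := by
    have hstep1 : (∫ s in (0:ℝ)..1, (1 - F s)) =
        ∫ s in (0:ℝ)..1, b 0 / b' 0 * (b' s / b s) := by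
      apply intervalIntegral.integral_congr_ae
      have hne1 : ∀ᵐ x : ℝ, x ≠ 1 := by
        rw [MeasureTheory.ae_iff]
        have hset : {x : ℝ | ¬ x ≠ 1} = {1} := by ext x; simp
        rw [hset]
        exact MeasureTheory.measure_singleton 1
      filter_upwards [hne1] with x hx hmem
      rw [Set.uIoc_of_le (zero_le_one (α := ℝ))] at hmem
      have hxIco : x ∈ Set.Ico (0:ℝ) 1 := ⟨hmem.1.le, lt_of_le_of_ne hmem.2 hx⟩
      rw [hFH x hxIco]
      simp only [hHdef]
      ring
    have hlogderiv : ∀ x ∈ Set.Ioo (0:ℝ) 1,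
        HasDerivWithinAt (fun z => Real.log (b z)) (b' x / b x) (Set.Ioi x) x := by
      intro x hx
      have hxI : Set.Icc (0:ℝ) 1 ∈ nhds x := Icc_mem_nhds hx.1 hx.2
      have hxm : x ∈ Set.Icc (0:ℝ) 1 := Set.Ioo_subset_Icc_self hx
      exact (((hd1 x hxm).hasDerivAt hxI).log (hbne x hxm)).hasDerivWithinAt
    have hlogcont : ContinuousOn (fun z => Real.log (b z)) (Set.Icc 0 1) :=
      ContinuousOn.log hbcont hbne
    have hintg : IntervalIntegrable (fun x => b' x / b x) MeasureTheory.volume 0 1 := by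
      apply ContinuousOn.intervalIntegrable
      rw [Set.uIcc_of_le (zero_le_one (α := ℝ))]
      exact hb'cont.div hbcont hbne
    have hftc := intervalIntegral.integral_eq_sub_of_hasDeriv_right_of_le
      (zero_le_one (α := ℝ)) hlogcont hlogderiv hintg
    rw [hstep1, intervalIntegral.integral_const_mul, hftc,
        Real.log_div hb0.ne' hb1.ne', div_neg]
    ring
  exact ⟨hFmono, hFrange, hFcont, hF0, hF1,
    fun z hz => ⟨hFderiv z hz, hdens z (Set.Ioo_subset_Icc_self hz)⟩, hTend, hInt⟩
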